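/- There exists an absolute constant C > 0 such that for every prime p and every E ⊆ F_p², |Q(E)| ≤ C·|Δ(E)|·( □(E) + |E|² ). -/

import Mathlib

open Finset

namespace FpDist

/-- Points of `𝔽_p²`. -/
abbrev Pt (p : ℕ) := ZMod p × ZMod p

/-- The "distance" `‖x - y‖ = (x₁-y₁)² + (x₂-y₂)²` in `𝔽_p²`. -/
def dist2 {p : ℕ} (x y : Pt p) : ZMod p := (x.1 - y.1)^2 + (x.2 - y.2)^2

/-- `‖x‖ = x₁² + x₂²`. -/
def norm2 {p : ℕ} (x : Pt p) : ZMod p := x.1^2 + x.2^2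

/-- The distance set `Δ(E) = {‖x - y‖ : x, y ∈ E}`. -/
def distSet {p : ℕ} (E : Finset (Pt p)) : Finset (ZMod p) :=
  (E ×ˢ E).image fun q => dist2 q.1 q.2

/-- `(a, b, c)` is a corner if `(b - a) · (c - a) = 0`. -/
def IsCorner {p : ℕ} (a b c : Pt p) : Prop :=
  (b.1 - a.1) * (c.1 - a.1) + (b.2 - a.2) * (c.2 - a.2) = 0

/-- `(a, b, c, d)` forms a rectangle if `(a,b,d), (b,a,c), (c,b,d), (d,a,c)` are corners. -/
def IsRectangle {p : ℕ} (a b c d : Pt p) : Prop :=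
  IsCorner a b d ∧ IsCorner b a c ∧ IsCorner c b d ∧ IsCorner d a c

/-- `□(E)`: the number of non-degenerate rectangles `(a,b,c,d) ∈ E⁴`
(non-degenerate: not all four vertices lie on one line). -/
noncomputable def rectCount (p : ℕ) [Fact p.Prime] (E : Finset (Pt p)) : ℕ :=
  Set.ncard {q : Pt p × Pt p × Pt p × Pt p |
    q.1 ∈ E ∧ q.2.1 ∈ E ∧ q.2.2.1 ∈ E ∧ q.2.2.2 ∈ E ∧
    IsRectangle q.1 q.2.1 q.2.2.1 q.2.2.2 ∧
    ¬ Collinear (ZMod p) ({q.1, q.2.1, q.2.2.1, q.2.2.2} : Set (Pt p))}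

/-- `T(E)`: the number of isosceles triangles, i.e. triples `(a,b,c) ∈ E³`
with `‖a - c‖ = ‖b - c‖ ≠ 0`. -/
def triCount {p : ℕ} (E : Finset (Pt p)) : ℕ :=
  ((E ×ˢ E ×ˢ E).filter fun q =>
    dist2 q.1 q.2.2 = dist2 q.2.1 q.2.2 ∧ dist2 q.1 q.2.2 ≠ 0).card

/-- The perpendicular bisector line `l_{ab} = {x : ‖x - a‖ = ‖x - b‖}`. -/
def bisector {p : ℕ} (a b : Pt p) : Set (Pt p) := {x | dist2 x a = dist2 x b}

/-- `Q(E)`: the number of quadruples `(a,b,c,d) ∈ E⁴` with `‖a-b‖ ≠ 0`, `‖c-d‖ ≠ 0`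
and `l_{ab} = l_{cd}`. -/
noncomputable def Qcount {p : ℕ} (E : Finset (Pt p)) : ℕ :=
  Set.ncard {q : Pt p × Pt p × Pt p × Pt p |
    q.1 ∈ E ∧ q.2.1 ∈ E ∧ q.2.2.1 ∈ E ∧ q.2.2.2 ∈ E ∧
    dist2 q.1 q.2.1 ≠ 0 ∧ dist2 q.2.2.1 q.2.2.2 ≠ 0 ∧
    bisector q.1 q.2.1 = bisector q.2.2.1 q.2.2.2}

variable {p : ℕ}

lemma ne_of_dist2_ne {a b : Pt p} (h : dist2 a b ≠ 0) : a ≠ b := by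
  rintro rfl; exact h (by simp [dist2])

/-- `(u₁, u₂, α)` encoding the line `{x : x·u = α}` which is the bisector of `a, b`. -/
def vec (a b : Pt p) : ZMod p × ZMod p × ZMod p :=
  (2*(b.1-a.1), 2*(b.2-a.2), norm2 b - norm2 a)

def line (w : ZMod p × ZMod p × ZMod p) : Set (Pt p) :=
  {x | x.1 * w.1 + x.2 * w.2.1 = w.2.2}

lemma bisector_eq_line (a b : Pt p) : bisector a b = line (vec a b) := by
  ext x
  simp only [bisector, line, vec, Set.mem_setOf_eq, dist2, norm2]
  constructor <;> intro h <;> linear_combination h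

def smul3 (c : ZMod p) (w : ZMod p × ZMod p × ZMod p) : ZMod p × ZMod p × ZMod p :=
  (c * w.1, c * w.2.1, c * w.2.2)

lemma smul3_smul3 (c d : ZMod p) (w : ZMod p × ZMod p × ZMod p) :
    smul3 c (smul3 d w) = smul3 (c*d) w := by
  simp [smul3, mul_assoc]

lemma smul3_one (w : ZMod p × ZMod p × ZMod p) : smul3 1 w = w := by simp [smul3]

def normalize (w : ZMod p × ZMod p × ZMod p) : ZMod p × ZMod p × ZMod p :=
  if w.1 = 0 then ((0:ZMod p), 1, w.2.2 * w.2.1⁻¹)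
  else ((1:ZMod p), w.2.1 * w.1⁻¹, w.2.2 * w.1⁻¹)

variable [Fact p.Prime]

lemma exists_smul3_normalize {w : ZMod p × ZMod p × ZMod p} (h : w.1 ≠ 0 ∨ w.2.1 ≠ 0) :
    ∃ c : ZMod p, c ≠ 0 ∧ w = smul3 c (normalize w) := by
  by_cases h1 : w.1 = 0
  · have h2 : w.2.1 ≠ 0 := h.resolve_left (not_not_intro h1)
    refine ⟨w.2.1, h2, ?_⟩
    rw [normalize, if_pos h1]
    refine Prod.ext ?_ (Prod.ext ?_ ?_) <;> simp [smul3, h1] <;> field_simp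
  · refine ⟨w.1, h1, ?_⟩
    rw [normalize, if_neg h1]
    refine Prod.ext ?_ (Prod.ext ?_ ?_) <;> simp [smul3, h1] <;> field_simp <;> ring

lemma normalize_smul3 {c : ZMod p} (hc : c ≠ 0) (w : ZMod p × ZMod p × ZMod p) :
    normalize (smul3 c w) = normalize w := by
  by_cases h1 : w.1 = 0
  · have hcw : c * w.1 = 0 := by rw [h1, mul_zero]
    rw [normalize, normalize, if_pos h1]
    rw [show (smul3 c w).1 = c * w.1 from rfl, if_pos hcw]
    by_cases h2 : w.2.1 = 0
    · simp [smul3, h2]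
    · refine Prod.ext rfl (Prod.ext rfl ?_)
      show c * w.2.2 * (c * w.2.1)⁻¹ = w.2.2 * w.2.1⁻¹
      field_simp
  · have hcw : c * w.1 ≠ 0 := mul_ne_zero hc h1
    rw [normalize, normalize, if_neg h1]
    rw [show (smul3 c w).1 = c * w.1 from rfl, if_neg hcw]
    refine Prod.ext rfl (Prod.ext ?_ ?_)
    · show c * w.2.1 * (c * w.1)⁻¹ = w.2.1 * w.1⁻¹
      field_simp
    · show c * w.2.2 * (c * w.1)⁻¹ = w.2.2 * w.1⁻¹
      field_simp

lemma exists_smul3_of_normalize_eq {w w' : ZMod p × ZMod p × ZMod p}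
    (h : w.1 ≠ 0 ∨ w.2.1 ≠ 0) (h' : w'.1 ≠ 0 ∨ w'.2.1 ≠ 0)
    (heq : normalize w = normalize w') : ∃ c : ZMod p, c ≠ 0 ∧ w' = smul3 c w := by
  obtain ⟨c, hc, hw⟩ := exists_smul3_normalize h
  obtain ⟨c', hc', hw'⟩ := exists_smul3_normalize h'
  refine ⟨c' * c⁻¹, mul_ne_zero hc' (inv_ne_zero hc), ?_⟩
  have hn : normalize w = smul3 c⁻¹ w := by
    calc normalize w = smul3 (c⁻¹ * c) (normalize w) := by
          rw [inv_mul_cancel₀ hc, smul3_one]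
      _ = smul3 c⁻¹ w := by rw [← smul3_smul3, ← hw]
  rw [hw', ← heq, hn, smul3_smul3]


lemma two_ne_zero'' (hp2 : p ≠ 2) : (2 : ZMod p) ≠ 0 := by
  have : ((2:ℕ) : ZMod p) ≠ 0 := by
    rw [Ne, ZMod.natCast_eq_zero_iff]
    intro hdvd
    exact hp2 ((Nat.prime_dvd_prime_iff_eq (Fact.out) Nat.prime_two).mp hdvd)
  simpa using this

lemma vec_ne (hp2 : p ≠ 2) {a b : Pt p} (hab : a ≠ b) :
    (vec a b).1 ≠ 0 ∨ (vec a b).2.1 ≠ 0 := by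
  by_contra hcon
  push_neg at hcon
  obtain ⟨h1, h2⟩ := hcon
  have h2' := two_ne_zero'' hp2
  simp only [vec] at h1 h2
  apply hab
  have e1 : b.1 - a.1 = 0 := (mul_eq_zero.mp h1).resolve_left h2'
  have e2 : b.2 - a.2 = 0 := (mul_eq_zero.mp h2).resolve_left h2'
  exact Prod.ext (sub_eq_zero.mp e1).symm (sub_eq_zero.mp e2).symm

lemma line_smul3 {c : ZMod p} (hc : c ≠ 0) (w : ZMod p × ZMod p × ZMod p) :
    line (smul3 c w) = line w := by
  ext x
  simp only [line, smul3, Set.mem_setOf_eq]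
  constructor
  · intro h
    have : c * (x.1 * w.1 + x.2 * w.2.1) = c * w.2.2 := by linear_combination h
    exact mul_left_cancel₀ hc this
  · intro h; linear_combination c * h

lemma exists_smul3_of_line_eq {w w' : ZMod p × ZMod p × ZMod p}
    (h : w.1 ≠ 0 ∨ w.2.1 ≠ 0) (h' : w'.1 ≠ 0 ∨ w'.2.1 ≠ 0)
    (heq : line w = line w') : ∃ c : ZMod p, c ≠ 0 ∧ w' = smul3 c w := by
  -- a point on the line
  obtain ⟨x₀, hx₀⟩ : ∃ x : Pt p, x.1 * w.1 + x.2 * w.2.1 = w.2.2 := by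
    rcases eq_or_ne w.1 0 with h1 | h1
    · have h2 : w.2.1 ≠ 0 := h.resolve_left (not_not_intro h1)
      exact ⟨(0, w.2.2 * w.2.1⁻¹), by field_simp [h1]; ring⟩
    · exact ⟨(w.2.2 * w.1⁻¹, 0), by field_simp; ring⟩
  have hx₀' : x₀.1 * w'.1 + x₀.2 * w'.2.1 = w'.2.2 := by
    have : x₀ ∈ line w' := by rw [← heq]; exact hx₀
    exact this
  -- the direction vector (-w₂, w₁) lies in the kernel
  have hy : (x₀.1 - w.2.1) * w.1 + (x₀.2 + w.1) * w.2.1 = w.2.2 := by linear_combination hx₀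
  have hy' : (x₀.1 - w.2.1) * w'.1 + (x₀.2 + w.1) * w'.2.1 = w'.2.2 := by
    have : ((x₀.1 - w.2.1, x₀.2 + w.1) : Pt p) ∈ line w' := by
      rw [← heq]; exact hy
    exact this
  have hcross : w.1 * w'.2.1 = w.2.1 * w'.1 := by linear_combination hy' - hx₀'
  set c : ZMod p := if w.1 = 0 then w'.2.1 * w.2.1⁻¹ else w'.1 * w.1⁻¹ with hcdef
  have h1 : w'.1 = c * w.1 := by
    rcases eq_or_ne w.1 0 with hz | hz
    · have h2 : w.2.1 ≠ 0 := h.resolve_left (not_not_intro hz)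
      have : w.2.1 * w'.1 = 0 := by rw [← hcross, hz, zero_mul]
      have : w'.1 = 0 := by
        rcases mul_eq_zero.mp this with hh | hh
        · exact absurd hh h2
        · exact hh
      rw [this, hz, mul_zero]
    · rw [hcdef, if_neg hz]; field_simp
  have h2 : w'.2.1 = c * w.2.1 := by
    rcases eq_or_ne w.1 0 with hz | hz
    · have h2 : w.2.1 ≠ 0 := h.resolve_left (not_not_intro hz)
      rw [hcdef, if_pos hz]; field_simp
    · rw [hcdef, if_neg hz]
      field_simp
      linear_combination hcross
  have h3 : w'.2.2 = c * w.2.2 := by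
    rw [← hx₀', h1, h2, ← hx₀]; ring
  have hc : c ≠ 0 := by
    intro hc0
    rw [hc0, zero_mul] at h1 h2
    rcases h' with hh | hh
    · exact hh h1
    · exact hh h2
  exact ⟨c, hc, Prod.ext h1 (Prod.ext h2 h3)⟩

/-- The key of a pair: normalized encoding of its bisector line. -/
def key (a b : Pt p) : ZMod p × ZMod p × ZMod p := normalize (vec a b)

lemma bisector_eq_iff_key (hp2 : p ≠ 2) {a b c d : Pt p}
    (hab : dist2 a b ≠ 0) (hcd : dist2 c d ≠ 0) :
    bisector a b = bisector c d ↔ key a b = key c d := by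
  have hab' := vec_ne hp2 (ne_of_dist2_ne hab)
  have hcd' := vec_ne hp2 (ne_of_dist2_ne hcd)
  constructor
  · intro hbis
    rw [bisector_eq_line, bisector_eq_line] at hbis
    obtain ⟨lam, hlam, hprop⟩ := exists_smul3_of_line_eq hab' hcd' hbis
    rw [key, key, hprop, normalize_smul3 hlam]
  · intro hkey
    obtain ⟨lam, hlam, hprop⟩ := exists_smul3_of_normalize_eq hab' hcd' hkey
    rw [bisector_eq_line, bisector_eq_line, hprop, line_smul3 hlam]


lemma helper_rect (hp2 : p ≠ 2) {a b c d : Pt p} (hab : dist2 a b ≠ 0)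
    (hv1 : d.1 - c.1 = b.1 - a.1) (hv2 : d.2 - c.2 = b.2 - a.2)
    (h3 : norm2 d - norm2 c = norm2 b - norm2 a) (hca : c ≠ a) :
    IsRectangle a b d c ∧ ¬ Collinear (ZMod p) ({a, b, d, c} : Set (Pt p)) := by
  have h2' := two_ne_zero'' hp2
  simp only [norm2] at h3
  have d1eq : d.1 = b.1 - a.1 + c.1 := by linear_combination hv1
  have d2eq : d.2 = b.2 - a.2 + c.2 := by linear_combination hv2
  have h2o : (2:ZMod p) * ((b.1-a.1)*(c.1-a.1) + (b.2-a.2)*(c.2-a.2)) = 0 := by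
    linear_combination h3 - (d.1 + b.1 - a.1 + c.1) * d1eq - (d.2 + b.2 - a.2 + c.2) * d2eq
  have orth : (b.1-a.1)*(c.1-a.1) + (b.2-a.2)*(c.2-a.2) = 0 :=
    (mul_eq_zero.mp h2o).resolve_left h2'
  constructor
  · refine ⟨?_, ?_, ?_, ?_⟩ <;> show _ = 0
    · linear_combination orth
    · linear_combination -orth + (a.1-b.1)*d1eq + (a.2-b.2)*d2eq
    · linear_combination orth + (d.1-a.1)*d1eq + (d.2-a.2)*d2eq
    · linear_combination -orth + (a.1-c.1)*d1eq + (a.2-c.2)*d2eq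
  · intro hcol
    have hmem : a ∈ ({a, b, d, c} : Set (Pt p)) := by simp
    obtain ⟨v, hv⟩ := (collinear_iff_of_mem hmem).mp hcol
    obtain ⟨rb, hrb⟩ := hv b (by simp)
    obtain ⟨rc, hrc⟩ := hv c (by simp)
    have hb1 : b.1 = rb * v.1 + a.1 := congrArg Prod.fst hrb
    have hb2 : b.2 = rb * v.2 + a.2 := congrArg Prod.snd hrb
    have hc1 : c.1 = rc * v.1 + a.1 := congrArg Prod.fst hrc
    have hc2 : c.2 = rc * v.2 + a.2 := congrArg Prod.snd hrc
    have hab' : dist2 a b = rb^2 * (v.1^2 + v.2^2) := by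
      simp only [dist2]
      linear_combination (b.1 + rb*v.1 - a.1)*hb1 + (b.2 + rb*v.2 - a.2)*hb2
    have hrb0 : rb ≠ 0 := by
      intro h; rw [h] at hab'; simp at hab'; exact hab hab'
    have hnv : v.1^2 + v.2^2 ≠ 0 := by
      intro h; rw [h, mul_zero] at hab'; exact hab hab'
    have horth' : rb * rc * (v.1^2 + v.2^2) = 0 := by
      linear_combination orth - (c.1-a.1)*hb1 - (c.2-a.2)*hb2 - (rb*v.1)*hc1 - (rb*v.2)*hc2
    have hrc0 : rc = 0 := by
      rcases mul_eq_zero.mp horth' with h | h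
      · rcases mul_eq_zero.mp h with h' | h'
        · exact absurd h' hrb0
        · exact h'
      · exact absurd h hnv
    apply hca
    rw [hrc0, zero_mul, zero_add] at hc1 hc2
    exact Prod.ext hc1 hc2

lemma rect_of_key_dist_eq (hp2 : p ≠ 2) {a b c d : Pt p}
    (hab : dist2 a b ≠ 0) (hcd : dist2 c d ≠ 0)
    (hkey : key a b = key c d) (hdist : dist2 a b = dist2 c d) :
    ((c, d) = (a, b)) ∨ ((c, d) = (b, a)) ∨
    (IsRectangle a b d c ∧ ¬ Collinear (ZMod p) ({a, b, d, c} : Set (Pt p))) ∨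
    (IsRectangle a b c d ∧ ¬ Collinear (ZMod p) ({a, b, c, d} : Set (Pt p))) := by
  have h2' := two_ne_zero'' hp2
  obtain ⟨lam, hlam, hprop⟩ :=
    exists_smul3_of_normalize_eq (vec_ne hp2 (ne_of_dist2_ne hab))
      (vec_ne hp2 (ne_of_dist2_ne hcd)) hkey
  have e1 : 2*(d.1 - c.1) = lam * (2*(b.1 - a.1)) := congrArg (·.1) hprop
  have e2 : 2*(d.2 - c.2) = lam * (2*(b.2 - a.2)) := congrArg (·.2.1) hprop
  have e3 : norm2 d - norm2 c = lam * (norm2 b - norm2 a) := congrArg (·.2.2) hprop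
  have hv1 : d.1 - c.1 = lam * (b.1 - a.1) :=
    mul_left_cancel₀ h2' (by linear_combination e1)
  have hv2 : d.2 - c.2 = lam * (b.2 - a.2) :=
    mul_left_cancel₀ h2' (by linear_combination e2)
  have hsq : (lam - 1) * (lam + 1) * dist2 a b = 0 := by
    simp only [dist2] at hdist ⊢
    linear_combination -hdist - (lam*(b.1-a.1)+(d.1-c.1))*hv1 - (lam*(b.2-a.2)+(d.2-c.2))*hv2
  have hlam1 : lam = 1 ∨ lam = -1 := by
    rcases mul_eq_zero.mp hsq with h | h
    · rcases mul_eq_zero.mp h with h' | h'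
      · left; linear_combination h'
      · right; linear_combination h'
    · exact absurd h hab
  rcases hlam1 with rfl | rfl
  · rw [one_mul] at hv1 hv2 e3
    rcases eq_or_ne c a with rfl | hca
    · left
      have : d = b := by
        refine Prod.ext ?_ ?_
        · linear_combination hv1
        · linear_combination hv2
      rw [this]
    · right; right; left
      exact helper_rect hp2 hab hv1 hv2 (by linear_combination e3) hca
  · rcases eq_or_ne d a with rfl | hda
    · right; left
      have : c = b := by
        refine Prod.ext ?_ ?_
        · linear_combination -hv1
        · linear_combination -hv2
      rw [this]
    · right; right; right
      refine helper_rect hp2 hab (c := d) (d := c) ?_ ?_ ?_ hda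
      · linear_combination -hv1
      · linear_combination -hv2
      · linear_combination -e3


section Counting

variable {α β γ : Type*} [DecidableEq α] [DecidableEq β] [DecidableEq γ]

lemma card_pairs_filter_eq (S : Finset α) (f : α → β) :
    ((S ×ˢ S).filter fun st => f st.1 = f st.2).card
      = ∑ k ∈ S.image f, ((S.filter fun s => f s = k).card) ^ 2 := by
  have hset : ((S ×ˢ S).filter fun st => f st.1 = f st.2)
      = (S.image f).biUnion
          (fun k => (S.filter fun s => f s = k) ×ˢ (S.filter fun s => f s = k)) := by
    ext ⟨s, t⟩
    simp only [mem_filter, mem_product, mem_biUnion, mem_image]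
    constructor
    · rintro ⟨⟨hs, ht⟩, hft⟩
      exact ⟨f s, ⟨s, hs, rfl⟩, ⟨hs, rfl⟩, ⟨ht, hft.symm⟩⟩
    · rintro ⟨k, _, ⟨hs, hks⟩, ht, hkt⟩
      exact ⟨⟨hs, ht⟩, by rw [hks, hkt]⟩
  rw [hset, card_biUnion]
  · exact sum_congr rfl fun k _ => by rw [card_product, sq]
  · intro k _ k' _ hkk'
    refine disjoint_left.mpr ?_
    rintro ⟨s, t⟩ h h'
    simp only [mem_product, mem_filter] at h h'
    exact hkk' (h.1.2.symm.trans h'.1.2)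

lemma nat_sq_sum_le (D : Finset γ) (f : γ → ℕ) :
    (∑ t ∈ D, f t) ^ 2 ≤ D.card * ∑ t ∈ D, f t ^ 2 := by
  have h := sq_sum_le_card_mul_sum_sq (s := D) (f := fun t => (f t : ℤ))
  exact_mod_cast h

lemma sum_sq_fiber_le (S : Finset α) (f : α → β) (g : α → γ) (D : Finset γ)
    (hD : ∀ s ∈ S, g s ∈ D) :
    ∑ k ∈ S.image f, ((S.filter fun s => f s = k).card) ^ 2
      ≤ D.card * ∑ κ ∈ S.image (fun s => (f s, g s)),
          ((S.filter fun s => (f s, g s) = κ).card) ^ 2 := by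
  set h : β × γ → ℕ := fun κ => ((S.filter fun s => (f s, g s) = κ).card) ^ 2 with hh
  have step1 : ∀ k ∈ S.image f,
      ((S.filter fun s => f s = k).card) ^ 2
        ≤ D.card * ∑ t ∈ (S.filter fun s => f s = k).image g, h (k, t) := by
    intro k _
    set Sk := S.filter fun s => f s = k with hSk
    have hfib : Sk.card = ∑ t ∈ Sk.image g, (Sk.filter fun s => g s = t).card :=
      card_eq_sum_card_fiberwise (fun s hs => mem_image_of_mem g hs)
    have heqf : ∀ t, (Sk.filter fun s => g s = t) = S.filter fun s => (f s, g s) = (k, t) := by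
      intro t
      rw [hSk, filter_filter]
      exact filter_congr fun s _ => by
        constructor
        · rintro ⟨h1, h2⟩; rw [h1, h2]
        · intro hkt
          exact ⟨(Prod.mk.injEq _ _ _ _ ▸ hkt : _ ∧ _).1, (Prod.mk.injEq _ _ _ _ ▸ hkt : _ ∧ _).2⟩
    calc Sk.card ^ 2 = (∑ t ∈ Sk.image g, (Sk.filter fun s => g s = t).card) ^ 2 := by rw [hfib]
      _ ≤ (Sk.image g).card * ∑ t ∈ Sk.image g, ((Sk.filter fun s => g s = t).card) ^ 2 :=
          nat_sq_sum_le _ _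
      _ ≤ D.card * ∑ t ∈ Sk.image g, h (k, t) := by
          refine Nat.mul_le_mul ?_ (le_of_eq ?_)
          · refine card_le_card ?_
            intro t ht
            obtain ⟨s, hs, rfl⟩ := mem_image.mp ht
            exact hD s (mem_filter.mp hs).1
          · exact sum_congr rfl fun t _ => by rw [hh]; rw [heqf t]
  calc ∑ k ∈ S.image f, ((S.filter fun s => f s = k).card) ^ 2
      ≤ ∑ k ∈ S.image f, D.card * ∑ t ∈ (S.filter fun s => f s = k).image g, h (k, t) :=
        sum_le_sum step1
    _ = D.card * ∑ k ∈ S.image f, ∑ t ∈ (S.filter fun s => f s = k).image g, h (k, t) := by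
        rw [mul_sum]
    _ = D.card * ∑ k ∈ S.image f,
          ∑ κ ∈ ((S.filter fun s => f s = k).image g).image (fun t => (k, t)), h κ := by
        refine congrArg _ (sum_congr rfl fun k _ => ?_)
        exact (sum_image fun x _ y _ hxy => by simpa using congrArg Prod.snd hxy).symm
    _ = D.card * ∑ κ ∈ (S.image f).biUnion
          (fun k => ((S.filter fun s => f s = k).image g).image (fun t => (k, t))), h κ := by
        refine congrArg _ (sum_biUnion ?_).symm
        intro k _ k' _ hkk'
        refine disjoint_left.mpr ?_
        rintro ⟨k₁, t₁⟩ hmem hmem'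
        obtain ⟨t, _, ht⟩ := mem_image.mp hmem
        obtain ⟨t', _, ht'⟩ := mem_image.mp hmem'
        have e1 : k = k₁ := ((Prod.mk.injEq _ _ _ _).mp ht).1
        have e2 : k' = k₁ := ((Prod.mk.injEq _ _ _ _).mp ht').1
        exact hkk' (e1.trans e2.symm)
    _ ≤ D.card * ∑ κ ∈ S.image (fun s => (f s, g s)), h κ := by
        refine Nat.mul_le_mul_left _ (sum_le_sum_of_subset ?_)
        intro κ hκ
        obtain ⟨k, hk, hκ'⟩ := mem_biUnion.mp hκ
        obtain ⟨t, ht, rfl⟩ := mem_image.mp hκ'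
        obtain ⟨s, hs, rfl⟩ := mem_image.mp ht
        obtain ⟨hsS, hfs⟩ := mem_filter.mp hs
        exact mem_image.mpr ⟨s, hsS, by rw [hfs]⟩

end Counting


def SS {p : ℕ} (E : Finset (Pt p)) : Finset (Pt p × Pt p) :=
  (E ×ˢ E).filter fun s => dist2 s.1 s.2 ≠ 0

lemma Qcount_eq_card (hp2 : p ≠ 2) (E : Finset (Pt p)) :
    Qcount E = ((SS E ×ˢ SS E).filter fun st => key st.1.1 st.1.2 = key st.2.1 st.2.2).card := by
  classical
  set φ : Pt p × Pt p × Pt p × Pt p → (Pt p × Pt p) × (Pt p × Pt p) :=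
    fun q => ((q.1, q.2.1), (q.2.2.1, q.2.2.2)) with hφ
  have hinj : Function.Injective φ := by
    rintro ⟨a, b, c, d⟩ ⟨a', b', c', d'⟩ hq
    simp only [hφ, Prod.mk.injEq] at hq
    obtain ⟨⟨rfl, rfl⟩, rfl, rfl⟩ := hq
    rfl
  rw [Qcount, ← Set.ncard_image_of_injective _ hinj, ← Set.ncard_coe_finset]
  congr 1
  ext ⟨⟨a, b⟩, c, d⟩
  constructor
  · rintro ⟨⟨a', b', c', d'⟩, ⟨ha, hb, hc, hd, hab, hcd, hbis⟩, heq⟩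
    simp only [hφ, Prod.mk.injEq] at heq
    obtain ⟨⟨rfl, rfl⟩, rfl, rfl⟩ := heq
    rw [mem_coe, mem_filter]
    exact ⟨mem_product.mpr ⟨mem_filter.mpr ⟨mem_product.mpr ⟨ha, hb⟩, hab⟩,
      mem_filter.mpr ⟨mem_product.mpr ⟨hc, hd⟩, hcd⟩⟩,
      (bisector_eq_iff_key hp2 hab hcd).mp hbis⟩
  · intro hmem
    rw [mem_coe, mem_filter] at hmem
    obtain ⟨hprod, hkey⟩ := hmem
    obtain ⟨h1, h2⟩ := mem_product.mp hprod
    obtain ⟨hab', hab⟩ := mem_filter.mp h1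
    obtain ⟨hcd', hcd⟩ := mem_filter.mp h2
    obtain ⟨ha, hb⟩ := mem_product.mp hab'
    obtain ⟨hc, hd⟩ := mem_product.mp hcd'
    exact ⟨(a, b, c, d),
      ⟨ha, hb, hc, hd, hab, hcd, (bisector_eq_iff_key hp2 hab hcd).mpr hkey⟩, rfl⟩

lemma main_odd (hp2 : p ≠ 2) (E : Finset (Pt p)) :
    Qcount E ≤ (distSet E).card * (2 * rectCount p E + 2 * E.card ^ 2) := by
  classical
  set S := SS E with hS
  set f : Pt p × Pt p → ZMod p × ZMod p × ZMod p := fun s => key s.1 s.2 with hf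
  set g : Pt p × Pt p → ZMod p := fun s => dist2 s.1 s.2 with hg
  have h3 := sum_sq_fiber_le S f g (distSet E) (fun s hs => by
    obtain ⟨hmem, -⟩ := mem_filter.mp hs
    exact mem_image_of_mem _ hmem)
  have h4 := card_pairs_filter_eq S (fun s => (f s, g s))
  set R := (S ×ˢ S).filter (fun st => (f st.1, g st.1) = (f st.2, g st.2)) with hR
  -- bound R
  set Ra := (S ×ˢ S).filter (fun st => IsRectangle st.1.1 st.1.2 st.2.2 st.2.1 ∧
      ¬ Collinear (ZMod p) ({st.1.1, st.1.2, st.2.2, st.2.1} : Set (Pt p))) with hRa'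
  set Rb := (S ×ˢ S).filter (fun st => IsRectangle st.1.1 st.1.2 st.2.1 st.2.2 ∧
      ¬ Collinear (ZMod p) ({st.1.1, st.1.2, st.2.1, st.2.2} : Set (Pt p))) with hRb'
  set D1 := (S ×ˢ S).filter (fun st => st.2 = st.1) with hD1'
  set D2 := (S ×ˢ S).filter (fun st => st.2 = (st.1.2, st.1.1)) with hD2'
  have hsub : R ⊆ D1 ∪ D2 ∪ Ra ∪ Rb := by
    rintro ⟨⟨a, b⟩, c, d⟩ hmem
    rw [hR, mem_filter] at hmem
    obtain ⟨hprod, heq2⟩ := hmem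
    have hab : dist2 a b ≠ 0 := (mem_filter.mp (mem_product.mp hprod).1).2
    have hcd : dist2 c d ≠ 0 := (mem_filter.mp (mem_product.mp hprod).2).2
    have hkey : key a b = key c d := congrArg Prod.fst heq2
    have hdist : dist2 a b = dist2 c d := congrArg Prod.snd heq2
    simp only [mem_union]
    rcases rect_of_key_dist_eq hp2 hab hcd hkey hdist with h | h | h | h
    · exact Or.inl (Or.inl (Or.inl (mem_filter.mpr ⟨hprod, h⟩)))
    · exact Or.inl (Or.inl (Or.inr (mem_filter.mpr ⟨hprod, h⟩)))
    · exact Or.inl (Or.inr (mem_filter.mpr ⟨hprod, h⟩))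
    · exact Or.inr (mem_filter.mpr ⟨hprod, h⟩)
  have hD1 : D1.card ≤ E.card ^ 2 := by
    have : D1.card ≤ (E ×ˢ E).card := by
      refine card_le_card_of_injOn (fun st => st.1) ?_ ?_
      · intro st hst
        exact mem_of_mem_filter st.1 (mem_product.mp (mem_of_mem_filter _ hst)).1
      · intro st hst st' hst' hfst
        have hfst' : st.1 = st'.1 := hfst
        have h1 := (mem_filter.mp hst).2
        have h2 := (mem_filter.mp hst').2
        exact Prod.ext hfst' (by rw [h1, h2, hfst'])
    simpa [card_product, sq] using this
  have hD2 : D2.card ≤ E.card ^ 2 := by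
    have : D2.card ≤ (E ×ˢ E).card := by
      refine card_le_card_of_injOn (fun st => st.1) ?_ ?_
      · intro st hst
        exact mem_of_mem_filter st.1 (mem_product.mp (mem_of_mem_filter _ hst)).1
      · intro st hst st' hst' hfst
        have hfst' : st.1 = st'.1 := hfst
        have h1 := (mem_filter.mp hst).2
        have h2 := (mem_filter.mp hst').2
        exact Prod.ext hfst' (by rw [h1, h2, hfst'])
    simpa [card_product, sq] using this
  have hRectFin : {q : Pt p × Pt p × Pt p × Pt p |
      q.1 ∈ E ∧ q.2.1 ∈ E ∧ q.2.2.1 ∈ E ∧ q.2.2.2 ∈ E ∧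
      IsRectangle q.1 q.2.1 q.2.2.1 q.2.2.2 ∧
      ¬ Collinear (ZMod p) ({q.1, q.2.1, q.2.2.1, q.2.2.2} : Set (Pt p))}.Finite := by
    refine Set.Finite.subset (finite_toSet (E ×ˢ E ×ˢ E ×ˢ E)) ?_
    rintro ⟨a, b, c, d⟩ h
    simp only [Set.mem_setOf_eq] at h
    simp only [mem_coe, mem_product]
    exact ⟨h.1, h.2.1, h.2.2.1, h.2.2.2.1⟩
  have hmemE : ∀ st ∈ S ×ˢ S, st.1.1 ∈ E ∧ st.1.2 ∈ E ∧ st.2.1 ∈ E ∧ st.2.2 ∈ E := by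
    intro st hst
    obtain ⟨h1, h2⟩ := mem_product.mp hst
    obtain ⟨h11, h12⟩ := mem_product.mp (mem_of_mem_filter _ h1)
    obtain ⟨h21, h22⟩ := mem_product.mp (mem_of_mem_filter _ h2)
    exact ⟨h11, h12, h21, h22⟩
  have hRa : Ra.card ≤ rectCount p E := by
    set ψ : (Pt p × Pt p) × Pt p × Pt p → Pt p × Pt p × Pt p × Pt p :=
      fun st => (st.1.1, st.1.2, st.2.2, st.2.1) with hψ
    have hinj : Function.Injective ψ := by
      rintro ⟨⟨a, b⟩, c, d⟩ ⟨⟨a', b'⟩, c', d'⟩ h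
      simp only [hψ, Prod.mk.injEq] at h
      obtain ⟨rfl, rfl, rfl, rfl⟩ := h
      rfl
    rw [rectCount, ← Set.ncard_coe_finset Ra, ← Set.ncard_image_of_injective _ hinj]
    refine Set.ncard_le_ncard ?_ hRectFin
    rintro q ⟨st, hst, rfl⟩
    rw [mem_coe, hRa', mem_filter] at hst
    obtain ⟨hprod, hrect, hcol⟩ := hst
    obtain ⟨he1, he2, he3, he4⟩ := hmemE st hprod
    exact ⟨he1, he2, he4, he3, hrect, hcol⟩
  have hRb : Rb.card ≤ rectCount p E := by
    set ψ : (Pt p × Pt p) × Pt p × Pt p → Pt p × Pt p × Pt p × Pt p :=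
      fun st => (st.1.1, st.1.2, st.2.1, st.2.2) with hψ
    have hinj : Function.Injective ψ := by
      rintro ⟨⟨a, b⟩, c, d⟩ ⟨⟨a', b'⟩, c', d'⟩ h
      simp only [hψ, Prod.mk.injEq] at h
      obtain ⟨rfl, rfl, rfl, rfl⟩ := h
      rfl
    rw [rectCount, ← Set.ncard_coe_finset Rb, ← Set.ncard_image_of_injective _ hinj]
    refine Set.ncard_le_ncard ?_ hRectFin
    rintro q ⟨st, hst, rfl⟩
    rw [mem_coe, hRb', mem_filter] at hst
    obtain ⟨hprod, hrect, hcol⟩ := hst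
    obtain ⟨he1, he2, he3, he4⟩ := hmemE st hprod
    exact ⟨he1, he2, he3, he4, hrect, hcol⟩
  have hRbound : R.card ≤ 2 * rectCount p E + 2 * E.card ^ 2 := by
    calc R.card ≤ (D1 ∪ D2 ∪ Ra ∪ Rb).card := card_le_card hsub
      _ ≤ (D1 ∪ D2 ∪ Ra).card + Rb.card := card_union_le _ _
      _ ≤ ((D1 ∪ D2).card + Ra.card) + Rb.card := by
          exact Nat.add_le_add_right (card_union_le _ _) _
      _ ≤ ((D1.card + D2.card) + Ra.card) + Rb.card := by
          exact Nat.add_le_add_right (Nat.add_le_add_right (card_union_le _ _) _) _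
      _ ≤ ((E.card ^ 2 + E.card ^ 2) + rectCount p E) + rectCount p E := by
          exact Nat.add_le_add (Nat.add_le_add (Nat.add_le_add hD1 hD2) hRa) hRb
      _ = 2 * rectCount p E + 2 * E.card ^ 2 := by ring
  calc Qcount E = ((S ×ˢ S).filter fun st => f st.1 = f st.2).card := Qcount_eq_card hp2 E
    _ = ∑ k ∈ S.image f, ((S.filter fun s => f s = k).card) ^ 2 := card_pairs_filter_eq S f
    _ ≤ (distSet E).card * ∑ κ ∈ S.image (fun s => (f s, g s)),
          ((S.filter fun s => (f s, g s) = κ).card) ^ 2 := h3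
    _ = (distSet E).card * R.card := by rw [← h4]
    _ ≤ (distSet E).card * (2 * rectCount p E + 2 * E.card ^ 2) :=
        Nat.mul_le_mul_left _ hRbound


/-- There is an absolute constant `C > 0` such that for every prime `p` and every
`E ⊆ 𝔽_p²`, `Q(E) ≤ C·|Δ(E)|·(□(E) + |E|²)`. -/
theorem Q_le_distSet_mul_rect :
    ∃ C : ℝ, 0 < C ∧
      ∀ (p : ℕ) [Fact p.Prime], ∀ E : Finset (Pt p),
        (Qcount E : ℝ) ≤ C * ((distSet E).card : ℝ) *
          ((rectCount p E : ℝ) + (E.card : ℝ) ^ 2) := by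
  refine ⟨16, by norm_num, ?_⟩
  intro p _ E
  have hrect : (0:ℝ) ≤ (rectCount p E : ℝ) := Nat.cast_nonneg _
  have hΔ0 : (0:ℝ) ≤ ((distSet E).card : ℝ) := Nat.cast_nonneg _
  have hsq : (0:ℝ) ≤ ((E.card : ℝ)) ^ 2 := sq_nonneg _
  by_cases hp2 : p = 2
  · subst hp2
    rcases E.eq_empty_or_nonempty with rfl | hne
    · have hQ0 : Qcount (∅ : Finset (Pt 2)) = 0 := by
        rw [Qcount]
        convert Set.ncard_empty (Pt 2 × Pt 2 × Pt 2 × Pt 2) using 2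
        ext ⟨a, b, c, d⟩
        simp
      rw [hQ0]
      push_cast
      positivity
    · have hE4 : Qcount E ≤ E.card ^ 2 * E.card ^ 2 := by
        rw [Qcount]
        calc Set.ncard _ ≤ (E ×ˢ E ×ˢ E ×ˢ E).card := by
              rw [← Set.ncard_coe_finset]
              refine Set.ncard_le_ncard ?_ (finite_toSet _)
              rintro ⟨a, b, c, d⟩ h
              simp only [Set.mem_setOf_eq] at h
              simp only [mem_coe, mem_product]
              exact ⟨h.1, h.2.1, h.2.2.1, h.2.2.2.1⟩
          _ = E.card ^ 2 * E.card ^ 2 := by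
              simp only [card_product]
              ring
      have hΔ : 1 ≤ (distSet E).card := by
        obtain ⟨x, hx⟩ := hne
        exact card_pos.mpr ⟨dist2 x x, mem_image.mpr ⟨(x, x), mem_product.mpr ⟨hx, hx⟩, rfl⟩⟩
      have hcard : E.card ≤ 4 := by
        have h := Finset.card_le_univ E
        simpa using h
      have h16 : E.card ^ 2 ≤ 16 := le_trans (Nat.pow_le_pow_left hcard 2) (by norm_num)
      have hQ : Qcount E ≤ 16 * E.card ^ 2 :=
        le_trans hE4 (Nat.mul_le_mul_right _ h16)
      have hQ' : (Qcount E : ℝ) ≤ 16 * (E.card : ℝ) ^ 2 := by exact_mod_cast hQ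
      have hΔ' : (1:ℝ) ≤ ((distSet E).card : ℝ) := by exact_mod_cast hΔ
      calc (Qcount E : ℝ) ≤ 16 * (E.card : ℝ) ^ 2 := hQ'
        _ = 16 * 1 * ((0:ℝ) + (E.card : ℝ) ^ 2) := by ring
        _ ≤ 16 * ((distSet E).card : ℝ) * ((rectCount 2 E : ℝ) + (E.card : ℝ) ^ 2) := by
            gcongr
  · have hQ := main_odd hp2 E
    have hQ' : (Qcount E : ℝ)
        ≤ ((distSet E).card : ℝ) * (2 * (rectCount p E : ℝ) + 2 * (E.card : ℝ) ^ 2) := by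
      exact_mod_cast hQ
    nlinarith [mul_nonneg hΔ0 (add_nonneg hrect hsq)]


end FpDist
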